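/- Let Λ be an artin algebra and 0 → X →^f M' →^g Y → 0 an (add M)-split sequence in mod Λ. Let V ⊕ 𝐌 be the complex in the homotopy category K(mod Λ), where V is the two-term complex X → M' (M' in degree 0) and 𝐌 is M concentrated in degree 0. Then the endomorphism ring End_{K(mod Λ)}(V ⊕ 𝐌) is isomorphic to End_Λ(Y ⊕ M), via the map taking a homotopy class of chain endomorphisms to the induced endomorphism on the cokernel. -/

import Mathlib

/-!
STATEMENT 19: Let `Λ` be an artin algebra and `0 → X →f M' →g Y → 0` an
`(add M)`-split sequence in `mod Λ`.  Let `V ⊕ 𝐌` be the complex which is the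
direct sum of the two-term complex `V : X → M'` (with `M'` in degree 0) and
the stalk complex `M` in degree 0; concretely it is the two-term complex
`X → M' ⊕ M` with differential `(f, 0)`.  Then the endomorphism ring
`End_{K(mod Λ)}(V ⊕ 𝐌)` in the homotopy category is isomorphic to
`End_Λ(Y ⊕ M)`, via the map sending the homotopy class of a chain
endomorphism to the endomorphism induced on the cokernel (i.e. the unique
endomorphism compatible, in degree 0, with the projection
`q = g ⊕ 𝟙 : M' ⊕ M → Y ⊕ M`).
-/

open CategoryTheory Limits ZeroObject

attribute [local instance] CategoryTheory.Abelian.hasFiniteBiproducts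

universe v u

noncomputable section

variable {A : Type u} [Category.{v} A] [Abelian A]

/-- The two-term cochain complex `⋯ → 0 → X → Y → 0 → ⋯` determined by
`f : X ⟶ Y`, with `X` in degree `-1` and `Y` in degree `0`. -/
def twoTermCx {X Y : A} (f : X ⟶ Y) : CochainComplex A ℤ where
  X n := if n = -1 then X else if n = 0 then Y else 0
  d i j :=
    if h : i = -1 ∧ j = 0 then
      eqToHom (by rw [h.1]; norm_num) ≫ f ≫ eqToHom (by rw [h.2]; norm_num)
    else 0
  shape i j hij := by
    try dsimp only
    rw [dif_neg]
    rintro ⟨rfl, rfl⟩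
    exact hij (by decide)
  d_comp_d' i j k _ _ := by
    try dsimp only
    by_cases h : i = -1 ∧ j = 0
    · obtain ⟨hi, hj⟩ := h
      have hn : ¬ (j = -1 ∧ k = 0) := by rintro ⟨rfl, -⟩; omega
      rw [dif_neg hn, comp_zero]
    · rw [dif_neg h, zero_comp]

/-- `add M`: direct summands of finite direct sums of copies of `M`. -/
def addM (M : A) : Set A :=
  { N | ∃ (k : ℕ) (s : N ⟶ ⨁ (fun _ : Fin k => M)) (r : (⨁ fun _ : Fin k => M) ⟶ N),
      s ≫ r = 𝟙 N }

namespace Stmt19Aux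

variable {X Z : A} (ι : X ⟶ Z)

lemma ttX_neg1 : (twoTermCx ι).X (-1) = X := by norm_num [twoTermCx]

lemma ttX_zero : (twoTermCx ι).X 0 = Z := by norm_num [twoTermCx]

lemma ttX_isZero (i : ℤ) (h1 : i ≠ -1) (h0 : i ≠ 0) : IsZero ((twoTermCx ι).X i) := by
  simp only [twoTermCx, if_neg h1, if_neg h0]
  exact isZero_zero A

lemma ttd : (twoTermCx ι).d (-1) 0 =
    eqToHom (ttX_neg1 ι) ≫ ι ≫ eqToHom (ttX_zero ι).symm := by
  simp only [twoTermCx]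
  rw [dif_pos (by simp)]

lemma ttd_zero (i j : ℤ) (h : ¬(i = -1 ∧ j = 0)) : (twoTermCx ι).d i j = 0 := by
  simp only [twoTermCx]
  rw [dif_neg h]
  rfl

/-- degree-0 component, transported. -/
def bOf (φ : twoTermCx ι ⟶ twoTermCx ι) : Z ⟶ Z :=
  eqToHom (ttX_zero ι).symm ≫ φ.f 0 ≫ eqToHom (ttX_zero ι)

/-- degree-(-1) component, transported. -/
def aOf (φ : twoTermCx ι ⟶ twoTermCx ι) : X ⟶ X :=
  eqToHom (ttX_neg1 ι).symm ≫ φ.f (-1) ≫ eqToHom (ttX_neg1 ι)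

lemma f_zero_eq (φ : twoTermCx ι ⟶ twoTermCx ι) :
    φ.f 0 = eqToHom (ttX_zero ι) ≫ bOf ι φ ≫ eqToHom (ttX_zero ι).symm := by
  simp [bOf]

lemma f_neg1_eq (φ : twoTermCx ι ⟶ twoTermCx ι) :
    φ.f (-1) = eqToHom (ttX_neg1 ι) ≫ aOf ι φ ≫ eqToHom (ttX_neg1 ι).symm := by
  simp [aOf]

lemma comm_ab (φ : twoTermCx ι ⟶ twoTermCx ι) :
    ι ≫ bOf ι φ = aOf ι φ ≫ ι := by
  have h := φ.comm' (-1) 0 (by simp)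
  rw [ttd] at h
  have h2 := congrArg
    (fun t => eqToHom (ttX_neg1 ι).symm ≫ t ≫ eqToHom (ttX_zero ι)) h
  simpa [aOf, bOf, Category.assoc] using h2.symm

lemma bOf_comp (φ φ' : twoTermCx ι ⟶ twoTermCx ι) :
    bOf ι (φ ≫ φ') = bOf ι φ ≫ bOf ι φ' := by
  simp [bOf]

lemma bOf_add (φ φ' : twoTermCx ι ⟶ twoTermCx ι) :
    bOf ι (φ + φ') = bOf ι φ + bOf ι φ' := by
  simp [bOf]

lemma bOf_id : bOf ι (𝟙 (twoTermCx ι)) = 𝟙 Z := by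
  simp [bOf]

/-- Construct a chain endomorphism of `twoTermCx ι` from compatible endomorphisms. -/
def ttHom (a : X ⟶ X) (b : Z ⟶ Z) (hcomm : ι ≫ b = a ≫ ι) :
    twoTermCx ι ⟶ twoTermCx ι where
  f i :=
    if h1 : i = -1 then
      eqToHom (by rw [h1]; exact ttX_neg1 ι) ≫ a ≫ eqToHom (by rw [h1]; exact (ttX_neg1 ι).symm)
    else if h0 : i = 0 then
      eqToHom (by rw [h0]; exact ttX_zero ι) ≫ b ≫ eqToHom (by rw [h0]; exact (ttX_zero ι).symm)
    else 0
  comm' i j hij := by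
    by_cases h : i = -1 ∧ j = 0
    · obtain ⟨rfl, rfl⟩ := h
      rw [ttd]
      simp [reassoc_of% hcomm]
    · rw [ttd_zero ι i j h, comp_zero, zero_comp]

lemma bOf_ttHom (a : X ⟶ X) (b : Z ⟶ Z) (hcomm : ι ≫ b = a ≫ ι) :
    bOf ι (ttHom ι a b hcomm) = b := by
  simp [bOf, ttHom]

/-- Build a homotopy from `h : Z ⟶ X` witnessing the differences of components. -/
def ttHomotopy (φ φ' : twoTermCx ι ⟶ twoTermCx ι) (h : Z ⟶ X)
    (hb : bOf ι φ = h ≫ ι + bOf ι φ')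
    (ha : aOf ι φ = ι ≫ h + aOf ι φ') : Homotopy φ φ' where
  hom i j :=
    if hij : i = 0 ∧ j = -1 then
      eqToHom (by rw [hij.1]; exact ttX_zero ι) ≫ h ≫
        eqToHom (by rw [hij.2]; exact (ttX_neg1 ι).symm)
    else 0
  zero i j hn := by
    rw [dif_neg]
    rintro ⟨rfl, rfl⟩
    exact hn (by decide)
  comm i := by
    by_cases h1 : i = -1
    · subst h1
      rw [dNext_eq _ (show (ComplexShape.up ℤ).Rel (-1) 0 by simp),
        prevD_eq _ (show (ComplexShape.up ℤ).Rel (-2) (-1) by simp)]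
      rw [ttd, ttd_zero ι (-2) (-1) (by omega), f_neg1_eq ι φ, f_neg1_eq ι φ', ha]
      simp
    · by_cases h0 : i = 0
      · subst h0
        rw [dNext_eq _ (show (ComplexShape.up ℤ).Rel 0 1 by simp),
          prevD_eq _ (show (ComplexShape.up ℤ).Rel (-1) 0 by simp)]
        rw [ttd, ttd_zero ι 0 1 (by omega), f_zero_eq ι φ, f_zero_eq ι φ', hb]
        simp
      · exact (ttX_isZero ι i h1 h0).eq_of_src _ _

lemma exists_h_of_homotopy (φ φ' : twoTermCx ι ⟶ twoTermCx ι) (H : Homotopy φ φ') :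
    ∃ h : Z ⟶ X, bOf ι φ = h ≫ ι + bOf ι φ' := by
  refine ⟨eqToHom (ttX_zero ι).symm ≫ H.hom 0 (-1) ≫ eqToHom (ttX_neg1 ι), ?_⟩
  have h := H.comm 0
  rw [dNext_eq _ (show (ComplexShape.up ℤ).Rel 0 1 by simp),
    prevD_eq _ (show (ComplexShape.up ℤ).Rel (-1) 0 by simp),
    ttd, ttd_zero ι 0 1 (by omega)] at h
  rw [bOf, bOf, h]
  simp

end Stmt19Aux

open Stmt19Aux

theorem stmt19 {R : Type u} [CommRing R] [IsArtinianRing R]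
    (Λ : Type u) [Ring Λ] [Algebra R Λ] [Module.Finite R Λ]
    (X M' Y M : ModuleCat.{u} Λ)
    [Module.Finite Λ X] [Module.Finite Λ M'] [Module.Finite Λ Y]
    [Module.Finite Λ M]
    (f : X ⟶ M') (g : M' ⟶ Y) (w : f ≫ g = 0)
    (hses : (ShortComplex.mk f g w).ShortExact)
    (hM' : M' ∈ addM M)
    (hleft : ∀ N ∈ addM M, ∀ ψ : X ⟶ N, ∃ h : M' ⟶ N, f ≫ h = ψ)
    (hright : ∀ N ∈ addM M, ∀ ψ : N ⟶ Y, ∃ h : N ⟶ M', h ≫ g = ψ) :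
    ∃ Φ :
      End ((HomotopyCategory.quotient (ModuleCat.{u} Λ) (ComplexShape.up ℤ)).obj
        (twoTermCx (f ≫ (biprod.inl : M' ⟶ M' ⊞ M)))) ≃+*
        End (Y ⊞ M),
      ∀ φ : twoTermCx (f ≫ (biprod.inl : M' ⟶ M' ⊞ M)) ⟶
          twoTermCx (f ≫ (biprod.inl : M' ⟶ M' ⊞ M)),
        (eqToHom (by norm_num [twoTermCx]) ≫ φ.f 0 ≫
            eqToHom (by norm_num [twoTermCx]) :
            (M' ⊞ M : ModuleCat.{u} Λ) ⟶ (M' ⊞ M : ModuleCat.{u} Λ)) ≫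
            biprod.map g (𝟙 M) =
          biprod.map g (𝟙 M) ≫
            Φ ((HomotopyCategory.quotient (ModuleCat.{u} Λ)
              (ComplexShape.up ℤ)).map φ) := by
  classical
  haveI : Mono f := hses.mono_f
  haveI : Epi g := hses.epi_g
  set ι : X ⟶ (M' ⊞ M : ModuleCat.{u} Λ) := f ≫ biprod.inl with hιdef
  set q : (M' ⊞ M : ModuleCat.{u} Λ) ⟶ (Y ⊞ M : ModuleCat.{u} Λ) := biprod.map g (𝟙 M)
    with hqdef
  haveI : Mono ι := by rw [hιdef]; infer_instance
  -- basic facts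
  have hιq : ι ≫ q = 0 := by
    rw [hιdef, hqdef, Category.assoc, biprod.inl_map, ← Category.assoc, w, zero_comp]
  have hq_epi : ∀ {T : ModuleCat.{u} Λ} (u v : (Y ⊞ M : ModuleCat.{u} Λ) ⟶ T),
      q ≫ u = q ≫ v → u = v := by
    intro T u v huv
    have h1 : biprod.inl ≫ q ≫ u = biprod.inl ≫ q ≫ v := by rw [huv]
    have h2 : biprod.inr ≫ q ≫ u = biprod.inr ≫ q ≫ v := by rw [huv]
    rw [hqdef] at h1 h2
    simp only [biprod.inl_map_assoc] at h1
    simp only [biprod.inr_map_assoc, Category.id_comp] at h2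
    apply biprod.hom_ext'
    · exact (cancel_epi g).mp h1
    · exact h2
  -- q is the cokernel of ι
  have hdesc : ∀ {T : ModuleCat.{u} Λ} (t : (M' ⊞ M : ModuleCat.{u} Λ) ⟶ T),
      ι ≫ t = 0 → ∃ u : (Y ⊞ M : ModuleCat.{u} Λ) ⟶ T, q ≫ u = t := by
    intro T t ht
    have hft : f ≫ (biprod.inl ≫ t) = 0 := by
      rw [← Category.assoc, ← hιdef, ht]
    obtain ⟨u₁, hu₁⟩ := CokernelCofork.IsColimit.desc' hses.exact.gIsCokernel
      (biprod.inl ≫ t) hft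
    refine ⟨biprod.desc u₁ (biprod.inr ≫ t), ?_⟩
    rw [hqdef]
    apply biprod.hom_ext'
    · simpa using hu₁
    · simp
  -- ι is the kernel of q
  have hker : ∀ {W : ModuleCat.{u} Λ} (t : W ⟶ (M' ⊞ M : ModuleCat.{u} Λ)),
      t ≫ q = 0 → ∃ h : W ⟶ X, h ≫ ι = t := by
    intro W t ht
    have h1 : (t ≫ biprod.fst) ≫ g = 0 := by
      have := congrArg (fun s => s ≫ (biprod.fst : (Y ⊞ M : ModuleCat.{u} Λ) ⟶ Y)) ht
      simpa [hqdef] using this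
    have h2 : t ≫ biprod.snd = 0 := by
      have := congrArg (fun s => s ≫ (biprod.snd : (Y ⊞ M : ModuleCat.{u} Λ) ⟶ M)) ht
      simpa [hqdef] using this
    obtain ⟨h, hh⟩ := KernelFork.IsLimit.lift' hses.exact.fIsKernel (t ≫ biprod.fst) h1
    refine ⟨h, ?_⟩
    dsimp at hh
    have hstep : h ≫ ι = (t ≫ biprod.fst) ≫ biprod.inl := by
      rw [hιdef, ← Category.assoc, hh]
    rw [hstep]
    calc (t ≫ biprod.fst) ≫ biprod.inl
        = (t ≫ biprod.fst) ≫ biprod.inl + (t ≫ biprod.snd) ≫ biprod.inr := by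
          rw [h2, zero_comp, add_zero]
      _ = t ≫ (biprod.fst ≫ biprod.inl + biprod.snd ≫ biprod.inr) := by
          rw [Preadditive.comp_add, Category.assoc, Category.assoc]
      _ = t := by rw [biprod.total, Category.comp_id]
  -- the induced endomorphism on the cokernel
  have hB : ∀ φ : twoTermCx ι ⟶ twoTermCx ι, ι ≫ bOf ι φ ≫ q = 0 := by
    intro φ
    rw [← Category.assoc, comm_ab ι φ, Category.assoc, hιq, comp_zero]
  choose ind hind using fun φ : twoTermCx ι ⟶ twoTermCx ι =>
    hdesc (bOf ι φ ≫ q) (hB φ)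
  have ind_unique : ∀ (φ : twoTermCx ι ⟶ twoTermCx ι)
      (u : (Y ⊞ M : ModuleCat.{u} Λ) ⟶ (Y ⊞ M : ModuleCat.{u} Λ)),
      q ≫ u = bOf ι φ ≫ q → u = ind φ := by
    intro φ u hu
    exact hq_epi u (ind φ) (by rw [hu, hind φ])
  have ind_eq_of_b : ∀ φ φ' : twoTermCx ι ⟶ twoTermCx ι,
      bOf ι φ ≫ q = bOf ι φ' ≫ q → ind φ = ind φ' := by
    intro φ φ' h
    exact hq_epi _ _ (by rw [hind φ, hind φ', h])
  have ind_homotopy : ∀ φ φ' : twoTermCx ι ⟶ twoTermCx ι,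
      Homotopy φ φ' → ind φ = ind φ' := by
    intro φ φ' H
    obtain ⟨h, hb⟩ := exists_h_of_homotopy ι φ φ' H
    apply ind_eq_of_b
    rw [hb, Preadditive.add_comp, Category.assoc, hιq, comp_zero, zero_add]
  have ind_comp : ∀ φ φ' : twoTermCx ι ⟶ twoTermCx ι,
      ind (φ ≫ φ') = ind φ ≫ ind φ' := by
    intro φ φ'
    refine (ind_unique _ _ ?_).symm
    rw [← Category.assoc, hind φ, Category.assoc, hind φ', bOf_comp, Category.assoc]
  have ind_add : ∀ φ φ' : twoTermCx ι ⟶ twoTermCx ι,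
      ind (φ + φ') = ind φ + ind φ' := by
    intro φ φ'
    refine (ind_unique _ _ ?_).symm
    rw [Preadditive.comp_add, hind φ, hind φ', bOf_add, Preadditive.add_comp]
  -- homotopy from equal induced maps
  have map_eq_of_b : ∀ φ φ' : twoTermCx ι ⟶ twoTermCx ι,
      bOf ι φ ≫ q = bOf ι φ' ≫ q →
      (HomotopyCategory.quotient (ModuleCat.{u} Λ) (ComplexShape.up ℤ)).map φ =
        (HomotopyCategory.quotient (ModuleCat.{u} Λ) (ComplexShape.up ℤ)).map φ' := by
    intro φ φ' hbq
    have hd : (bOf ι φ - bOf ι φ') ≫ q = 0 := by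
      rw [Preadditive.sub_comp, hbq, sub_self]
    obtain ⟨h, hh⟩ := hker _ hd
    have hbb : bOf ι φ = h ≫ ι + bOf ι φ' := by rw [hh]; abel
    have haa : aOf ι φ = ι ≫ h + aOf ι φ' := by
      rw [← cancel_mono ι]
      rw [← comm_ab ι φ, hbb, Preadditive.comp_add, Preadditive.add_comp, comm_ab ι φ']
      simp [Category.assoc]
    exact HomotopyCategory.eq_of_homotopy _ _ (ttHomotopy ι φ φ' h hbb haa)
  have ind_inj : ∀ φ φ' : twoTermCx ι ⟶ twoTermCx ι,
      ind φ = ind φ' →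
      (HomotopyCategory.quotient (ModuleCat.{u} Λ) (ComplexShape.up ℤ)).map φ =
        (HomotopyCategory.quotient (ModuleCat.{u} Λ) (ComplexShape.up ℤ)).map φ' := by
    intro φ φ' h
    exact map_eq_of_b φ φ' (by rw [← hind φ, ← hind φ', h])
  -- M' ⊞ M belongs to add M
  have hMM : (M' ⊞ M : ModuleCat.{u} Λ) ∈ addM M := by
    obtain ⟨k, s, r, hsr⟩ := hM'
    refine ⟨k + 1,
      biproduct.lift (fun j => Fin.cases biprod.snd
        (fun i => biprod.fst ≫ s ≫ biproduct.π (fun _ : Fin k => M) i) j),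
      biproduct.desc (fun j => Fin.cases biprod.inr
        (fun i => biproduct.ι (fun _ : Fin k => M) i ≫ r ≫ biprod.inl) j), ?_⟩
    rw [biproduct.lift_desc, Fin.sum_univ_succ]
    simp only [Fin.cases_zero, Fin.cases_succ, Category.assoc]
    have hsum : ∑ i : Fin k, (biprod.fst : (M' ⊞ M : ModuleCat.{u} Λ) ⟶ M') ≫ s ≫
          biproduct.π (fun _ : Fin k => M) i ≫
          biproduct.ι (fun _ : Fin k => M) i ≫ r ≫
          (biprod.inl : M' ⟶ (M' ⊞ M : ModuleCat.{u} Λ))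
        = (biprod.fst : (M' ⊞ M : ModuleCat.{u} Λ) ⟶ M') ≫ s ≫
          (∑ i : Fin k, biproduct.π (fun _ : Fin k => M) i ≫
          biproduct.ι (fun _ : Fin k => M) i) ≫ r ≫
          (biprod.inl : M' ⟶ (M' ⊞ M : ModuleCat.{u} Λ)) := by
      rw [Preadditive.sum_comp]
      simp [Preadditive.comp_sum, Preadditive.sum_comp, Category.assoc]
    rw [hsum, biproduct.total, Category.id_comp, reassoc_of% hsr]
    rw [add_comm]
    exact biprod.total
  -- surjectivity: lift an endomorphism of Y ⊞ M to a chain endomorphism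
  have hsurj : ∀ ψ : (Y ⊞ M : ModuleCat.{u} Λ) ⟶ (Y ⊞ M : ModuleCat.{u} Λ),
      ∃ φ : twoTermCx ι ⟶ twoTermCx ι, ind φ = ψ := by
    intro ψ
    obtain ⟨b₁, hb₁⟩ := hright _ hMM (q ≫ ψ ≫ biprod.fst)
    set b : (M' ⊞ M : ModuleCat.{u} Λ) ⟶ (M' ⊞ M : ModuleCat.{u} Λ) :=
      biprod.lift b₁ (q ≫ ψ ≫ biprod.snd) with hbdef
    have hbq : b ≫ q = q ≫ ψ := by
      apply biprod.hom_ext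
      · rw [hqdef]
        simp [hbdef, hb₁]
        rfl
      · rw [hqdef]
        simp [hbdef]
        rfl
    have hob : (ι ≫ b) ≫ q = 0 := by
      rw [Category.assoc, hbq, ← Category.assoc, hιq, zero_comp]
    obtain ⟨a, ha⟩ := hker (ι ≫ b) hob
    refine ⟨ttHom ι a b ha.symm, ?_⟩
    refine (ind_unique _ _ ?_).symm
    rw [bOf_ttHom, hbq]
  choose lift hlift using hsurj
  -- the ring isomorphism
  set F := HomotopyCategory.quotient (ModuleCat.{u} Λ) (ComplexShape.up ℤ) with hFdef
  have key : ∀ φ : twoTermCx ι ⟶ twoTermCx ι,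
      ind (F.preimage (F.map φ)) = ind φ := by
    intro φ
    exact ind_homotopy _ _ (HomotopyCategory.homotopyOfEq _ _ (F.map_preimage (F.map φ)))
  refine ⟨{
      toFun := fun η => ind (F.preimage η)
      invFun := fun ψ => F.map (lift ψ)
      left_inv := by
        intro η
        dsimp only
        have h1 : ind (lift (ind (F.preimage η))) = ind (F.preimage η) :=
          hlift (ind (F.preimage η))
        have h2 := ind_inj _ _ h1
        rw [h2, F.map_preimage]
      right_inv := by
        intro ψ
        dsimp only
        rw [key (lift ψ), hlift ψ]
      map_mul' := by
        intro η₁ η₂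
        have h1 : F.map (F.preimage (η₁ * η₂)) = F.map (F.preimage η₂ ≫ F.preimage η₁) := by
          rw [F.map_preimage, F.map_comp, F.map_preimage, F.map_preimage, End.mul_def]
        have h2 := ind_homotopy _ _ (HomotopyCategory.homotopyOfEq _ _ h1)
        rw [h2, ind_comp, End.mul_def]
      map_add' := by
        intro η₁ η₂
        have h1 : F.map (F.preimage (η₁ + η₂)) = F.map (F.preimage η₁ + F.preimage η₂) := by
          rw [F.map_preimage, F.map_add, F.map_preimage, F.map_preimage]
        have h2 := ind_homotopy _ _ (HomotopyCategory.homotopyOfEq _ _ h1)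
        rw [h2, ind_add] }, ?_⟩
  intro φ
  show bOf ι φ ≫ q = q ≫ ind (F.preimage (F.map φ))
  rw [key φ, hind φ]
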